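/- Assume b ≥ 0 (so 0 ∈ X), fix c in the interior of the dual cone C⁺, and let y¹, …, yᵗ ∈ ℝ^q be generating vectors of C (C = cone{y¹, …, yᵗ}) assembled as the columns of the q×t matrix Y. Consider the linear program (P0): minimize bᵀu over (u, w) ∈ ℝ^m × ℝ^q subject to Aᵀu − Pw ≥ 0, Yᵀ(w − c) ≥ 0, and u ≥ 0. Then (P) has a maximizer if and only if (P0) has an optimal solution. -/

import Mathlib

open Matrix Pointwise

/-- The conic hull of a set: all finite nonnegative combinations of its elements. -/
def coneHull {E : Type*} [AddCommMonoid E] [Module ℝ E] (S : Set E) : Set E :=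
  {v | ∃ (k : ℕ) (μ : Fin k → ℝ) (f : Fin k → E),
    (∀ i, 0 ≤ μ i) ∧ (∀ i, f i ∈ S) ∧ v = ∑ i, μ i • f i}

namespace VLPAux

def polySet {d : ℕ} (S : List ((Fin d → ℝ) × ℝ)) : Set (Fin d → ℝ) :=
  {x | ∀ p ∈ S, p.1 ⬝ᵥ x ≤ p.2}

lemma dot_snoc {d : ℕ} (a : Fin (d+1) → ℝ) (v : Fin d → ℝ) (z : ℝ) :
    a ⬝ᵥ (Fin.snoc v z) = Fin.init a ⬝ᵥ v + a (Fin.last d) * z := by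
  simp [dotProduct, Fin.sum_univ_castSucc, Fin.init]

lemma dot_append {m n : ℕ} (a : Fin m → ℝ) (c : Fin n → ℝ) (u : Fin m → ℝ) (v : Fin n → ℝ) :
    (Fin.append a c) ⬝ᵥ (Fin.append u v) = a ⬝ᵥ u + c ⬝ᵥ v := by
  simp [dotProduct, Fin.sum_univ_add, Fin.append_left, Fin.append_right]

lemma fm_step {d : ℕ} (S : List ((Fin (d+1) → ℝ) × ℝ)) :
    ∃ S' : List ((Fin d → ℝ) × ℝ),
      polySet S' = {v : Fin d → ℝ | ∃ z : ℝ, (Fin.snoc v z : Fin (d+1) → ℝ) ∈ polySet S} := by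
  classical
  set hd : ((Fin (d+1) → ℝ) × ℝ) → ℝ := fun p => p.1 (Fin.last d) with hhd
  refine ⟨(S.map fun p => if hd p = 0 then (Fin.init p.1, p.2) else (0,0))
    ++ ((S.product S).map fun pr =>
        if 0 < hd pr.1 ∧ hd pr.2 < 0 then
          (hd pr.1 • Fin.init pr.2.1 - hd pr.2 • Fin.init pr.1.1,
           hd pr.1 * pr.2.2 - hd pr.2 * pr.1.2)
        else (0,0)), ?_⟩
  ext v
  simp only [Set.mem_setOf_eq]
  constructor
  · intro hv
    set sp : ((Fin (d+1) → ℝ) × ℝ) → ℝ := fun p => Fin.init p.1 ⬝ᵥ v with hsp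
    set U : Set ℝ := {r | ∃ p ∈ S, 0 < hd p ∧ r = (p.2 - sp p) / hd p} with hU
    set L : Set ℝ := {r | ∃ p ∈ S, hd p < 0 ∧ r = (p.2 - sp p) / hd p} with hL
    have hUfin : U.Finite := by
      apply (S.finite_toSet.image fun p => (p.2 - sp p) / hd p).subset
      rintro r ⟨p, hp, _, rfl⟩; exact ⟨p, hp, rfl⟩
    have hLfin : L.Finite := by
      apply (S.finite_toSet.image fun p => (p.2 - sp p) / hd p).subset
      rintro r ⟨p, hp, _, rfl⟩; exact ⟨p, hp, rfl⟩
    have key : ∀ l ∈ L, ∀ u ∈ U, l ≤ u := by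
      rintro l ⟨p, hp, hpneg, rfl⟩ u ⟨r, hr, hrpos, rfl⟩
      have hmem : (hd r • Fin.init p.1 - hd p • Fin.init r.1,
          hd r * p.2 - hd p * r.2) ∈
          ((S.map fun p => if hd p = 0 then (Fin.init p.1, p.2) else (0,0))
          ++ ((S.product S).map fun pr =>
            if 0 < hd pr.1 ∧ hd pr.2 < 0 then
              (hd pr.1 • Fin.init pr.2.1 - hd pr.2 • Fin.init pr.1.1,
               hd pr.1 * pr.2.2 - hd pr.2 * pr.1.2)
            else (0,0))) := by
        refine List.mem_append_right _ ?_
        refine List.mem_map.2 ⟨(r, p), List.pair_mem_product.2 ⟨hr, hp⟩, ?_⟩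
        rw [if_pos ⟨hrpos, hpneg⟩]
      have hcon := hv _ hmem
      simp only [sub_dotProduct, smul_dotProduct, smul_eq_mul] at hcon
      -- hcon : hd r * sp p - hd p * sp r ≤ hd r * p.2 - hd p * r.2
      have h1 : (p.2 - sp p) / hd p * hd p = p.2 - sp p :=
        div_mul_cancel₀ _ (ne_of_lt hpneg)
      have h2 : (r.2 - sp r) / hd r * hd r = r.2 - sp r :=
        div_mul_cancel₀ _ (ne_of_gt hrpos)
      nlinarith [mul_pos hrpos (neg_pos.2 hpneg)]
    obtain ⟨z, hzU, hzL⟩ : ∃ z : ℝ, (∀ u ∈ U, z ≤ u) ∧ (∀ l ∈ L, l ≤ z) := by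
      by_cases hUne : U.Nonempty
      · refine ⟨sInf U, fun u hu => csInf_le hUfin.bddBelow hu, fun l hl => ?_⟩
        exact key l hl _ (hUne.csInf_mem hUfin)
      · by_cases hLne : L.Nonempty
        · refine ⟨sSup L, fun u hu => absurd ⟨u, hu⟩ hUne, fun l hl => le_csSup hLfin.bddAbove hl⟩
        · exact ⟨0, fun u hu => absurd ⟨u, hu⟩ hUne, fun l hl => absurd ⟨l, hl⟩ hLne⟩
    refine ⟨z, fun p hp => ?_⟩
    rw [dot_snoc]
    rcases lt_trichotomy (hd p) 0 with hneg | h0 | hpos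
    · have hlz : (p.2 - sp p) / hd p ≤ z := hzL _ ⟨p, hp, hneg, rfl⟩
      have : hd p * z ≤ hd p * ((p.2 - sp p) / hd p) :=
        mul_le_mul_of_nonpos_left hlz (le_of_lt hneg)
      rw [mul_div_cancel₀ _ (ne_of_lt hneg)] at this
      have : sp p + hd p * z ≤ p.2 := by linarith
      exact this
    · have hmem : (Fin.init p.1, p.2) ∈
          (S.map fun p => if hd p = 0 then (Fin.init p.1, p.2) else (0,0)) :=
        List.mem_map.2 ⟨p, hp, if_pos h0⟩
      have := hv _ (List.mem_append_left _ hmem)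
      simp only at this
      rw [show p.1 (Fin.last d) = (0:ℝ) from h0]; linarith [this]
    · have huz : z ≤ (p.2 - sp p) / hd p := hzU _ ⟨p, hp, hpos, rfl⟩
      have : hd p * z ≤ hd p * ((p.2 - sp p) / hd p) :=
        mul_le_mul_of_nonneg_left huz (le_of_lt hpos)
      rw [mul_div_cancel₀ _ (ne_of_gt hpos)] at this
      linarith
  · rintro ⟨z, hz⟩ q hq
    rcases List.mem_append.1 hq with hq | hq
    · obtain ⟨p, hp, rfl⟩ := List.mem_map.1 hq
      split_ifs with h0
      · have := hz p hp
        rw [dot_snoc] at this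
        rw [show p.1 (Fin.last d) = (0:ℝ) from h0] at this
        linarith
      · exact le_of_eq (zero_dotProduct v)
    · obtain ⟨⟨p, r⟩, hpr, rfl⟩ := List.mem_map.1 hq
      obtain ⟨hp, hr⟩ := List.pair_mem_product.1 hpr
      split_ifs with hcond
      · obtain ⟨hppos, hrneg⟩ := hcond
        have h1 := hz p hp
        have h2 := hz r hr
        rw [dot_snoc] at h1 h2
        simp only [sub_dotProduct, smul_dotProduct, smul_eq_mul]
        nlinarith [mul_le_mul_of_nonneg_left h2 (le_of_lt hppos),
          mul_le_mul_of_nonneg_left h1 (neg_nonneg.2 (le_of_lt hrneg))]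
      · exact le_of_eq (zero_dotProduct v)


lemma append_zero_right {d : ℕ} (v : Fin d → ℝ) (x : Fin 0 → ℝ) :
    (Fin.append v x : Fin (d+0) → ℝ) = v := by
  funext i
  have h : i = Fin.castAdd 0 (⟨i.1, i.2⟩ : Fin d) := Fin.ext rfl
  rw [h]
  exact Fin.append_left v x _

lemma fm_proj {d : ℕ} (k : ℕ) (S : List ((Fin (d+k) → ℝ) × ℝ)) :
    ∃ S' : List ((Fin d → ℝ) × ℝ),
      polySet S' = {v : Fin d → ℝ | ∃ x : Fin k → ℝ, Fin.append v x ∈ polySet S} := by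
  induction k with
  | zero =>
    refine ⟨S, ?_⟩
    ext v
    constructor
    · intro hv
      exact ⟨Fin.elim0, by rwa [append_zero_right]⟩
    · rintro ⟨x, hx⟩
      rwa [append_zero_right] at hx
  | succ k ih =>
    obtain ⟨S₁, hS₁⟩ := fm_step (d := d + k) S
    obtain ⟨S', hS'⟩ := ih S₁
    refine ⟨S', ?_⟩
    rw [hS']
    ext v
    simp only [Set.mem_setOf_eq]
    constructor
    · rintro ⟨x, hx⟩
      have := hS₁ ▸ hx
      obtain ⟨z, hz⟩ := this
      exact ⟨Fin.snoc x z, by rwa [Fin.append_snoc]⟩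
    · rintro ⟨x, hx⟩
      refine ⟨Fin.init x, ?_⟩
      have : (Fin.snoc (Fin.append v (Fin.init x)) (x (Fin.last k)) : Fin (d+k+1) → ℝ)
          ∈ polySet S := by
        rw [← Fin.append_snoc, Fin.snoc_init_self]
        exact hx
      rw [hS₁]
      exact ⟨x (Fin.last k), this⟩

lemma continuous_dot {d : ℕ} (a : Fin d → ℝ) : Continuous fun x : Fin d → ℝ => a ⬝ᵥ x := by
  unfold dotProduct
  exact continuous_finset_sum _ fun i _ => continuous_const.mul (continuous_apply i)

lemma polySet_closed {d : ℕ} (S : List ((Fin d → ℝ) × ℝ)) : IsClosed (polySet S) := by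
  have : polySet S = ⋂ p ∈ S, {x | p.1 ⬝ᵥ x ≤ p.2} := by
    ext x; simp [polySet, Set.mem_iInter]
  rw [this]
  exact isClosed_biInter fun p _ => isClosed_le (continuous_dot p.1) continuous_const

lemma one_dot {v : Fin 1 → ℝ} (a : Fin 1 → ℝ) : a ⬝ᵥ v = a 0 * v 0 := by
  simp [dotProduct, Fin.sum_univ_one]

theorem lp_attain {d : ℕ} (S : List ((Fin d → ℝ) × ℝ)) (c : Fin d → ℝ)
    (hne : (polySet S).Nonempty) {B : ℝ} (hB : ∀ x ∈ polySet S, c ⬝ᵥ x ≤ B) :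
    ∃ xb ∈ polySet S, ∀ x ∈ polySet S, c ⬝ᵥ x ≤ c ⬝ᵥ xb := by
  classical
  set e1 : Fin 1 → ℝ := fun _ => 1 with he1
  set S₂ : List ((Fin (1+d) → ℝ) × ℝ) :=
    (S.map fun p => (Fin.append (0 : Fin 1 → ℝ) p.1, p.2))
    ++ [(Fin.append e1 (-c), 0), (Fin.append (-e1) c, 0)] with hS₂def
  have hmem2 : ∀ (v : Fin 1 → ℝ) (x : Fin d → ℝ),
      Fin.append v x ∈ polySet S₂ ↔ (x ∈ polySet S ∧ v 0 = c ⬝ᵥ x) := by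
    intro v x
    have e1dot : ∀ w : Fin 1 → ℝ, e1 ⬝ᵥ w = w 0 := by
      intro w; rw [one_dot]; simp [he1]
    constructor
    · intro hvx
      have h1 := hvx (Fin.append e1 (-c), 0)
        (List.mem_append_right _ (by simp))
      have h2 := hvx (Fin.append (-e1) c, 0)
        (List.mem_append_right _ (by simp))
      simp only [dot_append] at h1 h2
      rw [e1dot] at h1
      rw [neg_dotProduct, e1dot] at h2
      rw [neg_dotProduct] at h1
      refine ⟨fun p hp => ?_, by linarith⟩
      have h3 := hvx (Fin.append (0 : Fin 1 → ℝ) p.1, p.2)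
        (List.mem_append_left _ (List.mem_map.2 ⟨p, hp, rfl⟩))
      simp only [dot_append, zero_dotProduct, zero_add] at h3
      exact h3
    · rintro ⟨hx, hv0⟩ p hp
      rcases List.mem_append.1 hp with hp | hp
      · obtain ⟨r, hr, rfl⟩ := List.mem_map.1 hp
        simp only [dot_append, zero_dotProduct, zero_add]
        exact hx r hr
      · simp only [List.mem_cons, List.mem_singleton] at hp
        rcases hp with rfl | rfl | h
        · simp only [dot_append, neg_dotProduct]
          rw [e1dot]
          linarith
        · simp only [dot_append, neg_dotProduct]
          rw [e1dot]
          linarith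
        · exact absurd h List.not_mem_nil
  -- project to the objective-value line
  obtain ⟨S', hS'⟩ := fm_proj (d := 1) d S₂
  set J : Set ℝ := {r | (fun _ : Fin 1 => r) ∈ polySet S'} with hJ
  have hJchar : ∀ r : ℝ, r ∈ J ↔ ∃ x ∈ polySet S, c ⬝ᵥ x = r := by
    intro r
    rw [hJ, Set.mem_setOf_eq, hS', Set.mem_setOf_eq]
    constructor
    · rintro ⟨x, hx⟩
      rw [hmem2] at hx
      exact ⟨x, hx.1, hx.2.symm⟩
    · rintro ⟨x, hx, hcx⟩
      exact ⟨x, (hmem2 _ x).2 ⟨hx, hcx.symm⟩⟩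
  have hJclosed : IsClosed J := by
    have : J = ⋂ p ∈ S', {r : ℝ | p.1 0 * r ≤ p.2} := by
      ext r
      simp only [hJ, Set.mem_setOf_eq, Set.mem_iInter, polySet, one_dot]
    rw [this]
    exact isClosed_biInter fun p _ =>
      isClosed_le (continuous_const.mul continuous_id) continuous_const
  have hJne : J.Nonempty := by
    obtain ⟨x₀, hx₀⟩ := hne
    exact ⟨c ⬝ᵥ x₀, (hJchar _).2 ⟨x₀, hx₀, rfl⟩⟩
  have hJbdd : BddAbove J := by
    refine ⟨B, fun r hr => ?_⟩
    obtain ⟨x, hx, rfl⟩ := (hJchar r).1 hr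
    exact hB x hx
  have hsup : sSup J ∈ J := hJclosed.csSup_mem hJne hJbdd
  obtain ⟨xb, hxb, hcxb⟩ := (hJchar _).1 hsup
  refine ⟨xb, hxb, fun x hx => ?_⟩
  rw [hcxb]
  exact le_csSup hJbdd ((hJchar _).2 ⟨x, hx, rfl⟩)


lemma isClosed_coneCombos_fin {N M : ℕ} (g : Fin M → Fin N → ℝ) :
    IsClosed {v : Fin N → ℝ | ∃ μ : Fin M → ℝ, (∀ j, 0 ≤ μ j) ∧ v = ∑ j, μ j • g j} := by
  classical
  set SC : List ((Fin (N+M) → ℝ) × ℝ) :=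
    (List.ofFn fun j : Fin M => (Fin.append (0 : Fin N → ℝ) (-(Pi.single j 1)), (0:ℝ)))
    ++ (List.ofFn fun i : Fin N =>
          (Fin.append (Pi.single i 1) (fun j => -(g j i)), (0:ℝ)))
    ++ (List.ofFn fun i : Fin N =>
          (Fin.append (-(Pi.single i 1)) (fun j => g j i), (0:ℝ))) with hSC
  have hchar : ∀ (v : Fin N → ℝ) (μ : Fin M → ℝ),
      Fin.append v μ ∈ polySet SC ↔ ((∀ j, 0 ≤ μ j) ∧ v = ∑ j, μ j • g j) := by
    intro v μ
    have hsum : ∀ i, (∑ j, μ j • g j) i = (fun j => g j i) ⬝ᵥ μ := by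
      intro i
      rw [dotProduct]
      simp only [Finset.sum_apply, Pi.smul_apply, smul_eq_mul]
      exact Finset.sum_congr rfl fun j _ => mul_comm _ _
    have hneg : ∀ i : Fin N, (fun j => -g j i) ⬝ᵥ μ = -((fun j => g j i) ⬝ᵥ μ) := by
      intro i
      simp [dotProduct, neg_mul, Finset.sum_neg_distrib]
    constructor
    · intro h
      have hj : ∀ j, 0 ≤ μ j := by
        intro j
        have := h _ (List.mem_append_left _ (List.mem_append_left _
          (List.mem_ofFn.2 ⟨j, rfl⟩)))
        simp only [dot_append, zero_dotProduct, neg_dotProduct,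
          single_dotProduct, one_mul, zero_add] at this
        linarith
      refine ⟨hj, funext fun i => ?_⟩
      have h1 := h _ (List.mem_append_left _ (List.mem_append_right _
        (List.mem_ofFn.2 ⟨i, rfl⟩)))
      have h2 := h _ (List.mem_append_right _ (List.mem_ofFn.2 ⟨i, rfl⟩))
      simp only [dot_append, single_dotProduct, neg_dotProduct,
        one_mul] at h1 h2
      rw [hneg i] at h1
      rw [hsum i]
      linarith
    · rintro ⟨hj, rfl⟩ p hp
      rcases List.mem_append.1 hp with hp | hp
      · rcases List.mem_append.1 hp with hp | hp
        · obtain ⟨j, rfl⟩ := List.mem_ofFn.1 hp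
          simp only [dot_append, zero_dotProduct, neg_dotProduct,
            single_dotProduct, one_mul, zero_add]
          linarith [hj j]
        · obtain ⟨i, rfl⟩ := List.mem_ofFn.1 hp
          simp only [dot_append, single_dotProduct, neg_dotProduct, one_mul]
          rw [hneg i, hsum i]
          linarith
      · obtain ⟨i, rfl⟩ := List.mem_ofFn.1 hp
        simp only [dot_append, single_dotProduct, neg_dotProduct, one_mul]
        rw [hsum i]
        linarith
  obtain ⟨S', hS'⟩ := fm_proj (d := N) M SC
  have : {v : Fin N → ℝ | ∃ μ : Fin M → ℝ, (∀ j, 0 ≤ μ j) ∧ v = ∑ j, μ j • g j}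
      = polySet S' := by
    rw [hS']
    ext v
    simp only [Set.mem_setOf_eq]
    constructor
    · rintro ⟨μ, hμ⟩
      exact ⟨μ, (hchar v μ).2 hμ⟩
    · rintro ⟨μ, hμ⟩
      exact ⟨μ, (hchar v μ).1 hμ⟩
  rw [this]
  exact polySet_closed S'

lemma isClosed_coneCombos {N : ℕ} {ι : Type*} [Fintype ι] (g : ι → Fin N → ℝ) :
    IsClosed {v : Fin N → ℝ | ∃ μ : ι → ℝ, (∀ j, 0 ≤ μ j) ∧ v = ∑ j, μ j • g j} := by
  classical
  set e := Fintype.equivFin ι with he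
  have : {v : Fin N → ℝ | ∃ μ : ι → ℝ, (∀ j, 0 ≤ μ j) ∧ v = ∑ j, μ j • g j}
      = {v : Fin N → ℝ | ∃ μ' : Fin (Fintype.card ι) → ℝ,
          (∀ j, 0 ≤ μ' j) ∧ v = ∑ j, μ' j • (g ∘ e.symm) j} := by
    ext v
    constructor
    · rintro ⟨μ, hμ, rfl⟩
      refine ⟨μ ∘ e.symm, fun j => hμ _, ?_⟩
      rw [← Equiv.sum_comp e.symm (fun j => μ j • g j)]
      rfl
    · rintro ⟨μ', hμ', rfl⟩
      refine ⟨μ' ∘ e, fun j => hμ' _, ?_⟩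
      rw [← Equiv.sum_comp e.symm (fun j => (μ' ∘ e) j • g j)]
      simp only [Function.comp_apply, Equiv.apply_symm_apply]
    -- done
  rw [this]
  exact isClosed_coneCombos_fin (g ∘ e.symm)

theorem farkas_gen {N : ℕ} {ι : Type*} [Fintype ι] (g : ι → Fin N → ℝ) (β : Fin N → ℝ)
    (h : ∀ ψ : Fin N → ℝ, (∀ j, ψ ⬝ᵥ g j ≤ 0) → ψ ⬝ᵥ β ≤ 0) :
    ∃ μ : ι → ℝ, (∀ j, 0 ≤ μ j) ∧ β = ∑ j, μ j • g j := by
  classical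
  by_contra hcon
  push_neg at hcon
  set plainSet : Set (Fin N → ℝ) :=
    {v | ∃ μ : ι → ℝ, (∀ j, 0 ≤ μ j) ∧ v = ∑ j, μ j • g j} with hplain
  set φ := WithLp.equiv 2 (Fin N → ℝ) with hφ
  set K : ConvexCone ℝ (EuclideanSpace ℝ (Fin N)) :=
    { carrier := φ ⁻¹' plainSet
      smul_mem' := by
        rintro a ha x ⟨μ, hμ, hx⟩
        refine ⟨fun j => a * μ j, fun j => mul_nonneg (le_of_lt ha) (hμ j), ?_⟩
        show φ (a • x) = _
        rw [show φ (a • x) = a • φ x from rfl, hx, Finset.smul_sum]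
        exact Finset.sum_congr rfl fun j _ => by simp [smul_smul]
      add_mem' := by
        rintro x ⟨μ, hμ, hx⟩ z ⟨ν, hν, hz⟩
        refine ⟨fun j => μ j + ν j, fun j => add_nonneg (hμ j) (hν j), ?_⟩
        show φ (x + z) = _
        rw [show φ (x + z) = φ x + φ z from rfl, hx, hz, ← Finset.sum_add_distrib]
        exact Finset.sum_congr rfl fun j _ => (add_smul (μ j) (ν j) (g j)).symm } with hK
  have hKclosed : IsClosed (K : Set (EuclideanSpace ℝ (Fin N))) :=
    IsClosed.preimage (f := φ) (PiLp.continuous_ofLp 2 _) (isClosed_coneCombos g)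
  have hKne : ((K : Set (EuclideanSpace ℝ (Fin N)))).Nonempty := by
    refine ⟨0, ⟨fun _ => 0, fun j => le_refl 0, ?_⟩⟩
    show φ 0 = _
    rw [show φ 0 = 0 from rfl]
    simp
  have hbK : (φ.symm β) ∉ K := by
    intro hmem
    obtain ⟨μ, hμ, hβ⟩ := hmem
    rw [Equiv.apply_symm_apply] at hβ
    exact hcon μ hμ hβ
  obtain ⟨yy, hy1, hy2⟩ :=
    ProperCone.hyperplane_separation' (⟨K.toPointedCone (by
      show (0 : EuclideanSpace ℝ (Fin N)) ∈ K
      refine ⟨fun _ => 0, fun j => le_refl 0, ?_⟩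
      show φ 0 = _
      rw [show φ 0 = 0 from rfl]
      simp), hKclosed⟩ : ProperCone ℝ (EuclideanSpace ℝ (Fin N))) hbK
  set ψ : Fin N → ℝ := fun i => -(yy i) with hψ
  have hinner : ∀ x z : EuclideanSpace ℝ (Fin N),
      (inner ℝ x z : ℝ) = ∑ i, x i * z i := by
    intro x z
    rw [PiLp.inner_apply]
    simp [RCLike.inner_apply, conj_trivial]
    exact Finset.sum_congr rfl fun i _ => mul_comm _ _
  have hcols : ∀ j, ψ ⬝ᵥ g j ≤ 0 := by
    intro j
    have hsingle : ∑ i, (Pi.single j (1:ℝ) : ι → ℝ) i • g i = g j := by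
      rw [Fintype.sum_eq_single j (fun k hk => by rw [Pi.single_eq_of_ne hk, zero_smul])]
      simp
    have hgK : (φ.symm (g j)) ∈ K := by
      refine ⟨Pi.single j 1, fun i => ?_, ?_⟩
      · rcases eq_or_ne i j with rfl | hij
        · simp
        · simp [Pi.single_eq_of_ne hij]
      · show φ (φ.symm (g j)) = _
        rw [Equiv.apply_symm_apply]
        exact hsingle.symm
    have hpos := hy1 _ hgK
    rw [hinner] at hpos
    have hpos2 : (0:ℝ) ≤ ∑ i, g j i * yy i := hpos
    have heq : ψ ⬝ᵥ g j = -∑ i, g j i * yy i := by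
      rw [dotProduct, ← Finset.sum_neg_distrib]
      exact Finset.sum_congr rfl fun i _ => by simp [hψ]; ring
    rw [heq]
    linarith
  have hfinal := h ψ hcols
  rw [hinner] at hy2
  have hy2' : (∑ i, yy i * β i : ℝ) < 0 := lt_of_eq_of_lt (Finset.sum_congr rfl fun i _ => mul_comm _ _) hy2
  have heq : ψ ⬝ᵥ β = -∑ i, yy i * β i := by
    rw [dotProduct, ← Finset.sum_neg_distrib]
    exact Finset.sum_congr rfl fun i _ => by simp [hψ]
  rw [heq] at hfinal
  linarith


lemma dot_sum_right {d : ℕ} {ι : Type*} [Fintype ι] (a : Fin d → ℝ) (f : ι → Fin d → ℝ) :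
    a ⬝ᵥ (∑ j, f j) = ∑ j, a ⬝ᵥ f j := by
  simp only [dotProduct, Finset.sum_apply, Finset.mul_sum]
  exact Finset.sum_comm

lemma dot_le_dot_right {d : ℕ} {a a' x : Fin d → ℝ} (h : ∀ i, a i ≤ a' i) (hx : 0 ≤ x) :
    a ⬝ᵥ x ≤ a' ⬝ᵥ x :=
  Finset.sum_le_sum fun i _ => mul_le_mul_of_nonneg_right (h i) (hx i)

lemma mulVec_dot_swap {nn qq : ℕ} (P : Matrix (Fin nn) (Fin qq) ℝ) (w : Fin qq → ℝ)
    (x : Fin nn → ℝ) : (P.mulVec w) ⬝ᵥ x = w ⬝ᵥ (P.transpose.mulVec x) := by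
  rw [dotProduct_comm, Matrix.dotProduct_mulVec, ← Matrix.mulVec_transpose,
    dotProduct_comm]

lemma append_decomp {a b : ℕ} (z : Fin (a+b) → ℝ) :
    Fin.append (fun i => z (Fin.castAdd b i)) (fun j => z (Fin.natAdd a j)) = z := by
  funext i
  refine Fin.addCases (fun i0 => ?_) (fun j0 => ?_) i
  · rw [Fin.append_left]
  · rw [Fin.append_right]

lemma mulVec_apply' {a b : ℕ} (M : Matrix (Fin a) (Fin b) ℝ) (v : Fin b → ℝ) (i : Fin a) :
    M.mulVec v i = ∑ j, M i j * v j := rfl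

lemma sum_mul_single' {k : ℕ} (s : Fin k → ℝ) (i : Fin k) :
    ∑ i', s i' * ((Pi.single i' (1:ℝ) : Fin k → ℝ) i) = s i := by
  simp [Pi.single_apply, mul_ite, mul_one, mul_zero, Finset.sum_ite_eq]

lemma dotProduct_self_pos {d : ℕ} {v : Fin d → ℝ} (hv : v ≠ 0) : 0 < v ⬝ᵥ v := by
  rcases (Finset.sum_nonneg fun i _ => mul_self_nonneg (v i)).lt_or_eq with h | h
  · exact h
  · exact absurd ((dotProduct_self_eq_zero (v := v)).1 h.symm) hv

end VLPAux

open VLPAux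

/-- Assume b ≥ 0, c ∈ int C⁺ and C = cone{y¹,…,yᵗ}. Then (P) has a maximizer iff
the auxiliary linear program (P₀): minimize bᵀu subject to Aᵀu − Pw ≥ 0,
Yᵀ(w − c) ≥ 0, u ≥ 0, has an optimal solution. -/
theorem has_maximizer_iff_P0_has_optimal_solution
    (n m q t : ℕ) (hn : 0 < n) (hm : 0 < m) (hq : 0 < q) (ht : 0 < t)
    (P : Matrix (Fin n) (Fin q) ℝ) (A : Matrix (Fin m) (Fin n) ℝ) (b : Fin m → ℝ)
    (hb : 0 ≤ b)
    (C : Set (Fin q → ℝ))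
    (hC0 : {(0 : Fin q → ℝ)} ⊂ C) (hCuniv : C ≠ Set.univ)
    (y : Fin t → Fin q → ℝ) (hCgen : C = coneHull (Set.range y))
    (hCpointed : ∀ v ∈ C, -v ∈ C → v = 0)
    (hCsolid : (interior C).Nonempty)
    (X : Set (Fin n → ℝ)) (hX : X = {x | A.mulVec x ≤ b ∧ 0 ≤ x})
    (c : Fin q → ℝ) (hc : c ∈ interior {z : Fin q → ℝ | ∀ v ∈ C, 0 ≤ z ⬝ᵥ v}) :
    (∃ xbar ∈ X,
        ({P.transpose.mulVec xbar} + (C \ {0})) ∩ (P.transpose.mulVec '' X) = ∅)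
      ↔ ∃ (u : Fin m → ℝ) (w : Fin q → ℝ),
          (P.mulVec w ≤ A.transpose.mulVec u ∧ (∀ i, 0 ≤ y i ⬝ᵥ (w - c)) ∧ 0 ≤ u) ∧
          ∀ (u' : Fin m → ℝ) (w' : Fin q → ℝ),
            (P.mulVec w' ≤ A.transpose.mulVec u' ∧ (∀ i, 0 ≤ y i ⬝ᵥ (w' - c)) ∧ 0 ≤ u')
            → b ⬝ᵥ u ≤ b ⬝ᵥ u' := by
  classical
  have hcmem : ∀ v ∈ C, 0 ≤ c ⬝ᵥ v := fun v hv => interior_subset hc v hv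
  have hstrict : ∀ v ∈ C, v ≠ 0 → 0 < c ⬝ᵥ v := by
    intro v hv hvne
    rcases (hcmem v hv).lt_or_eq with h | h
    · exact h
    · exfalso
      obtain ⟨ε, hε, hball⟩ := Metric.mem_nhds_iff.1 (mem_interior_iff_mem_nhds.1 hc)
      set δ : ℝ := ε / (2 * (‖v‖ + 1)) with hδ
      have hnv : (0:ℝ) ≤ ‖v‖ := norm_nonneg v
      have hδpos : 0 < δ := by positivity
      have hδe : δ * (‖v‖ + 1) = ε / 2 := by
        rw [hδ]; field_simp
      have hzball : c - δ • v ∈ Metric.ball c ε := by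
        rw [Metric.mem_ball, dist_eq_norm]
        have h1 : c - δ • v - c = -(δ • v) := by abel
        rw [h1, norm_neg, norm_smul, Real.norm_eq_abs, abs_of_pos hδpos]
        nlinarith
      have hzC := hball hzball v hv
      have hvv : 0 < v ⬝ᵥ v := dotProduct_self_pos hvne
      rw [sub_dotProduct, smul_dotProduct, smul_eq_mul] at hzC
      nlinarith
  -- characterization of the feasible set of (P0)
  set SP : List ((Fin (m+q) → ℝ) × ℝ) :=
    (List.ofFn fun i : Fin n =>
      (Fin.append (fun j => -(A j i)) (fun j => P i j), (0:ℝ)))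
    ++ (List.ofFn fun l : Fin t =>
      (Fin.append (0 : Fin m → ℝ) (fun j => -(y l j)), -(y l ⬝ᵥ c)))
    ++ (List.ofFn fun j : Fin m =>
      (Fin.append (-(Pi.single j 1 : Fin m → ℝ)) (0 : Fin q → ℝ), (0:ℝ))) with hSP
  have hSPchar : ∀ (u : Fin m → ℝ) (w : Fin q → ℝ), Fin.append u w ∈ polySet SP ↔
      (P.mulVec w ≤ A.transpose.mulVec u ∧ (∀ l, 0 ≤ y l ⬝ᵥ (w - c)) ∧ 0 ≤ u) := by
    intro u w
    have hAi : ∀ i : Fin n, (fun j => -(A j i)) ⬝ᵥ u = -(A.transpose.mulVec u i) := by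
      intro i
      simp [dotProduct, Matrix.mulVec, Matrix.transpose, neg_mul,
        Finset.sum_neg_distrib]
    have hPi : ∀ i : Fin n, (fun j => P i j) ⬝ᵥ w = P.mulVec w i := fun i => rfl
    have hyl : ∀ l : Fin t, (fun j => -(y l j)) ⬝ᵥ w = -(y l ⬝ᵥ w) := by
      intro l
      simp [dotProduct, neg_mul, Finset.sum_neg_distrib]
    constructor
    · intro h
      refine ⟨fun i => ?_, fun l => ?_, fun j => ?_⟩
      · have := h _ (List.mem_append_left _ (List.mem_append_left _
          (List.mem_ofFn.2 ⟨i, rfl⟩)))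
        rw [dot_append, hAi, hPi] at this
        have h' : -(A.transpose.mulVec u) i + (P.mulVec w) i ≤ (0:ℝ) := this
        linarith
      · have := h _ (List.mem_append_left _ (List.mem_append_right _
          (List.mem_ofFn.2 ⟨l, rfl⟩)))
        rw [dot_append, hyl, zero_dotProduct] at this
        have h' : 0 + -(y l ⬝ᵥ w) ≤ -(y l ⬝ᵥ c) := this
        rw [dotProduct_sub]
        linarith
      · have := h _ (List.mem_append_right _ (List.mem_ofFn.2 ⟨j, rfl⟩))
        rw [dot_append, neg_dotProduct, single_dotProduct, one_mul,
          zero_dotProduct] at this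
        have h' : -(u j) + 0 ≤ (0:ℝ) := this
        show (0:ℝ) ≤ u j
        linarith
    · rintro ⟨h1, h2, h3⟩ p hp
      rcases List.mem_append.1 hp with hp | hp
      · rcases List.mem_append.1 hp with hp | hp
        · obtain ⟨i, rfl⟩ := List.mem_ofFn.1 hp
          rw [dot_append, hAi, hPi]
          have h1' := h1 i
          have : -(A.transpose.mulVec u) i + (P.mulVec w) i ≤ (0:ℝ) := by linarith
          exact this
        · obtain ⟨l, rfl⟩ := List.mem_ofFn.1 hp
          rw [dot_append, hyl, zero_dotProduct]
          have h2' := h2 l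
          rw [dotProduct_sub] at h2'
          have : 0 + -(y l ⬝ᵥ w) ≤ -(y l ⬝ᵥ c) := by linarith
          exact this
      · obtain ⟨j, rfl⟩ := List.mem_ofFn.1 hp
        rw [dot_append, neg_dotProduct, single_dotProduct, one_mul,
          zero_dotProduct]
        have h3' : (0:ℝ) ≤ u j := h3 j
        have : -(u j) + 0 ≤ (0:ℝ) := by linarith
        exact this
  constructor
  · -- maximizer implies optimal solution of (P0)
    rintro ⟨xbar, hxbarX, hmax⟩
    rw [hX] at hxbarX
    obtain ⟨hAxbar, hxbar0⟩ := hxbarX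
    -- Step 1: feasibility of (P0), via Farkas
    have hfeas : ∃ (u : Fin m → ℝ) (w : Fin q → ℝ),
        P.mulVec w ≤ A.transpose.mulVec u ∧ (∀ l, 0 ≤ y l ⬝ᵥ (w - c)) ∧ 0 ≤ u := by
      have hnegdot : ∀ {k : ℕ} (x a : Fin k → ℝ), (x ⬝ᵥ fun i => -(a i)) = -(x ⬝ᵥ a) := by
        intro k x a
        simp [dotProduct, mul_neg, Finset.sum_neg_distrib]
      set gg : (Fin m ⊕ Fin q ⊕ Fin q ⊕ Fin n ⊕ Fin t) → Fin (n+t) → ℝ :=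
        Sum.elim (fun j => Fin.append (fun i => A j i) (0 : Fin t → ℝ))
          (Sum.elim (fun j => Fin.append (fun i => -(P i j)) (fun l => y l j))
            (Sum.elim (fun j => Fin.append (fun i => P i j) (fun l => -(y l j)))
              (Sum.elim (fun i => Fin.append (-(Pi.single i 1 : Fin n → ℝ)) (0 : Fin t → ℝ))
                (fun l => Fin.append (0 : Fin n → ℝ) (-(Pi.single l 1 : Fin t → ℝ)))))) with hgg
      set bb : Fin (n+t) → ℝ := Fin.append (0 : Fin n → ℝ) (fun l => y l ⬝ᵥ c) with hbb
      have hkey : ∀ ψ : Fin (n+t) → ℝ, (∀ j, ψ ⬝ᵥ gg j ≤ 0) → ψ ⬝ᵥ bb ≤ 0 := by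
        intro ψ hψ
        set dd : Fin n → ℝ := fun i => ψ (Fin.castAdd t i) with hdd
        set lam : Fin t → ℝ := fun l => ψ (Fin.natAdd n l) with hlam
        have hψdec : ψ = Fin.append dd lam := (append_decomp ψ).symm
        have hd0 : ∀ i, 0 ≤ dd i := by
          intro i
          have h := hψ (Sum.inr (Sum.inr (Sum.inr (Sum.inl i))))
          rw [hgg] at h
          simp only [Sum.elim_inl, Sum.elim_inr] at h
          rw [hψdec, dot_append, dotProduct_zero, add_zero,
            dotProduct_neg, dotProduct_single, mul_one] at h
          linarith
        have hl0 : ∀ l, 0 ≤ lam l := by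
          intro l
          have h := hψ (Sum.inr (Sum.inr (Sum.inr (Sum.inr l))))
          rw [hgg] at h
          simp only [Sum.elim_inl, Sum.elim_inr] at h
          rw [hψdec, dot_append, dotProduct_zero, zero_add,
            dotProduct_neg, dotProduct_single, mul_one] at h
          linarith
        have hAd : ∀ j : Fin m, dd ⬝ᵥ (fun i => A j i) ≤ 0 := by
          intro j
          have h := hψ (Sum.inl j)
          rw [hgg] at h
          simp only [Sum.elim_inl, Sum.elim_inr] at h
          rwa [hψdec, dot_append, dotProduct_zero, add_zero] at h
        have hPY : ∀ j : Fin q, dd ⬝ᵥ (fun i => P i j) = lam ⬝ᵥ (fun l => y l j) := by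
          intro j
          have h1 := hψ (Sum.inr (Sum.inl j))
          have h2 := hψ (Sum.inr (Sum.inr (Sum.inl j)))
          rw [hgg] at h1 h2
          simp only [Sum.elim_inl, Sum.elim_inr] at h1 h2
          rw [hψdec, dot_append, hnegdot] at h1
          rw [hψdec, dot_append, hnegdot] at h2
          linarith
        set v : Fin q → ℝ := fun j => lam ⬝ᵥ (fun l => y l j) with hv
        have hvsum : v = ∑ l, lam l • y l := by
          funext j
          show lam ⬝ᵥ (fun l => y l j) = _
          simp only [Finset.sum_apply, Pi.smul_apply, smul_eq_mul]
          rfl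
        have hvPd : P.transpose.mulVec dd = v := by
          funext j
          show P.transpose.mulVec dd j = lam ⬝ᵥ (fun l => y l j)
          rw [← hPY j, dotProduct_comm]
          rfl
        have hcv : ψ ⬝ᵥ bb = c ⬝ᵥ v := by
          rw [hψdec, hbb, dot_append, dotProduct_zero, zero_add, hvsum,
            dot_sum_right]
          refine Finset.sum_congr rfl fun l _ => ?_
          rw [dotProduct_smul, smul_eq_mul, dotProduct_comm]
        by_contra hpos
        push_neg at hpos
        rw [hcv] at hpos
        have hvC : v ∈ C := by
          rw [hCgen, hvsum]
          exact ⟨t, lam, y, hl0, fun l => Set.mem_range_self l, rfl⟩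
        have hvne : v ≠ 0 := by
          intro h0
          rw [h0, dotProduct_zero] at hpos
          exact lt_irrefl 0 hpos
        -- contradiction with maximality
        have hAx' : A.mulVec (xbar + dd) ≤ b := by
          intro j
          rw [Matrix.mulVec_add]
          have h1 := hAd j
          rw [dotProduct_comm] at h1
          have h2 : (A.mulVec dd) j ≤ 0 := h1
          have h3 := hAxbar j
          rw [Pi.add_apply]
          linarith
        have hx'0 : 0 ≤ xbar + dd := fun i => by
          have h1 : (0:ℝ) ≤ xbar i := hxbar0 i
          have h2 := hd0 i
          rw [Pi.add_apply]
          show (0:ℝ) ≤ xbar i + dd i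
          linarith
        have hz1 : P.transpose.mulVec xbar + v ∈
            ({P.transpose.mulVec xbar} + (C \ {0})) := by
          rw [Set.mem_add]
          exact ⟨P.transpose.mulVec xbar, Set.mem_singleton _, v,
            ⟨hvC, by simpa using hvne⟩, rfl⟩
        have hz2 : P.transpose.mulVec xbar + v ∈ (P.transpose.mulVec '' X) := by
          refine ⟨xbar + dd, ?_, ?_⟩
          · rw [hX]; exact ⟨hAx', hx'0⟩
          · rw [Matrix.mulVec_add, hvPd]
        rw [Set.eq_empty_iff_forall_notMem] at hmax
        exact hmax _ ⟨hz1, hz2⟩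
      obtain ⟨μ, hμ0, hμeq⟩ := farkas_gen gg bb hkey
      set uu : Fin m → ℝ := fun j => μ (Sum.inl j) with huu
      set wp : Fin q → ℝ := fun j => μ (Sum.inr (Sum.inl j)) with hwp
      set wm : Fin q → ℝ := fun j => μ (Sum.inr (Sum.inr (Sum.inl j))) with hwm
      set s1 : Fin n → ℝ := fun i => μ (Sum.inr (Sum.inr (Sum.inr (Sum.inl i)))) with hs1
      set s2 : Fin t → ℝ := fun l => μ (Sum.inr (Sum.inr (Sum.inr (Sum.inr l)))) with hs2
      rw [hgg, Fintype.sum_sum_type, Fintype.sum_sum_type, Fintype.sum_sum_type,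
        Fintype.sum_sum_type] at hμeq
      simp only [Sum.elim_inl, Sum.elim_inr] at hμeq
      refine ⟨uu, wp - wm, fun i => ?_, fun l => ?_, fun j => hμ0 (Sum.inl j)⟩
      · have h := congrFun hμeq (Fin.castAdd t i)
        simp only [hbb, Pi.add_apply, Finset.sum_apply, Pi.smul_apply, smul_eq_mul,
          Fin.append_left, Pi.zero_apply, Pi.neg_apply, mul_zero, mul_neg,
          Finset.sum_neg_distrib, add_zero, mul_one, Finset.sum_const_zero] at h
        rw [sum_mul_single'] at h
        have e1 : (∑ x : Fin m, μ (Sum.inl x) * A x i) = ∑ j, uu j * A j i := rfl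
        have e2 : (∑ x : Fin q, μ (Sum.inr (Sum.inl x)) * P i x) = ∑ j, wp j * P i j := rfl
        have e3 : (∑ x : Fin q, μ (Sum.inr (Sum.inr (Sum.inl x))) * P i x)
            = ∑ j, wm j * P i j := rfl
        have e4 : μ (Sum.inr (Sum.inr (Sum.inr (Sum.inl i)))) = s1 i := rfl
        rw [e1, e2, e3, e4] at h
        have hATu : (A.transpose.mulVec uu) i = ∑ j, uu j * A j i := by
          rw [mulVec_apply']
          exact Finset.sum_congr rfl fun j _ => mul_comm _ _
        have hPw : (P.mulVec (wp - wm)) i = (∑ j, wp j * P i j) - (∑ j, wm j * P i j) := by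
          rw [mulVec_apply', ← Finset.sum_sub_distrib]
          refine Finset.sum_congr rfl fun j _ => ?_
          rw [Pi.sub_apply]
          ring
        have hs1i : 0 ≤ s1 i := hμ0 _
        rw [hPw, hATu]
        linarith [h]
      · have h := congrFun hμeq (Fin.natAdd n l)
        simp only [hbb, Pi.add_apply, Finset.sum_apply, Pi.smul_apply, smul_eq_mul,
          Fin.append_right, Pi.zero_apply, Pi.neg_apply, mul_zero, mul_neg,
          Finset.sum_neg_distrib, add_zero, zero_add, mul_one,
          Finset.sum_const_zero] at h
        rw [sum_mul_single'] at h
        have e2 : (∑ x : Fin q, μ (Sum.inr (Sum.inl x)) * y l x) = ∑ j, wp j * y l j := rfl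
        have e3 : (∑ x : Fin q, μ (Sum.inr (Sum.inr (Sum.inl x))) * y l x)
            = ∑ j, wm j * y l j := rfl
        have e4 : μ (Sum.inr (Sum.inr (Sum.inr (Sum.inr l)))) = s2 l := rfl
        rw [e2, e3, e4] at h
        have ewp : y l ⬝ᵥ wp = ∑ j, wp j * y l j :=
          Finset.sum_congr rfl fun j _ => mul_comm _ _
        have ewm : y l ⬝ᵥ wm = ∑ j, wm j * y l j :=
          Finset.sum_congr rfl fun j _ => mul_comm _ _
        have hyw : y l ⬝ᵥ ((wp - wm) - c)
            = (∑ j, wp j * y l j) - (∑ j, wm j * y l j) - y l ⬝ᵥ c := by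
          rw [dotProduct_sub, dotProduct_sub, ewp, ewm]
        have hs2l : 0 ≤ s2 l := hμ0 _
        rw [hyw]
        linarith [h]
    -- Step 2: attainment
    obtain ⟨u₀, w₀, hfeas₀⟩ := hfeas
    have hne : (polySet SP).Nonempty := ⟨Fin.append u₀ w₀, (hSPchar u₀ w₀).2 hfeas₀⟩
    set cobj : Fin (m+q) → ℝ := Fin.append (-b) (0 : Fin q → ℝ) with hcobj
    have hcobjdot : ∀ (u : Fin m → ℝ) (w : Fin q → ℝ),
        cobj ⬝ᵥ Fin.append u w = -(b ⬝ᵥ u) := by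
      intro u w
      rw [hcobj, dot_append, neg_dotProduct, zero_dotProduct, add_zero]
    have hbound : ∀ z ∈ polySet SP, cobj ⬝ᵥ z ≤ 0 := by
      intro z hz
      rw [← append_decomp z] at hz ⊢
      rw [hcobjdot]
      obtain ⟨-, -, hu0⟩ := (hSPchar _ _).1 hz
      have : 0 ≤ b ⬝ᵥ (fun j => z (Fin.castAdd q j)) :=
        Finset.sum_nonneg fun j _ => mul_nonneg (hb j) (hu0 j)
      linarith
    obtain ⟨zbar, hzbar, hzopt⟩ := lp_attain SP cobj hne hbound
    set u := fun j => zbar (Fin.castAdd q j) with hu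
    set w := fun j => zbar (Fin.natAdd m j) with hw
    have hzdec : Fin.append u w = zbar := append_decomp zbar
    refine ⟨u, w, (hSPchar u w).1 (hzdec ▸ hzbar), ?_⟩
    intro u' w' hfeas'
    have h1 := hzopt _ ((hSPchar u' w').2 hfeas')
    rw [← hzdec, hcobjdot, hcobjdot] at h1
    linarith
  · -- optimal (indeed merely feasible) solution of (P0) implies maximizer
    rintro ⟨u, w, ⟨hf1, hf2, hf3⟩, -⟩
    have hwC : ∀ v ∈ C, 0 ≤ (w - c) ⬝ᵥ v := by
      intro v hv
      rw [hCgen] at hv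
      obtain ⟨k, μ, f, hμ, hf, rfl⟩ := hv
      rw [dot_sum_right]
      refine Finset.sum_nonneg fun i _ => ?_
      rw [dotProduct_smul, smul_eq_mul]
      obtain ⟨l, hl⟩ := hf i
      refine mul_nonneg (hμ i) ?_
      rw [← hl, dotProduct_comm]
      exact hf2 l
    have hwpos : ∀ v ∈ C, v ≠ 0 → 0 < w ⬝ᵥ v := by
      intro v hv hvne
      have h1 := hstrict v hv hvne
      have h2 := hwC v hv
      rw [sub_dotProduct] at h2
      linarith
    -- the scalarized problem over X
    set SX : List ((Fin n → ℝ) × ℝ) :=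
      (List.ofFn fun i : Fin m => ((A i : Fin n → ℝ), b i))
      ++ (List.ofFn fun j : Fin n => (-(Pi.single j 1 : Fin n → ℝ), (0:ℝ))) with hSX
    have hXchar : ∀ x : Fin n → ℝ, x ∈ polySet SX ↔ (A.mulVec x ≤ b ∧ 0 ≤ x) := by
      intro x
      constructor
      · intro h
        refine ⟨fun i => ?_, fun j => ?_⟩
        · exact h _ (List.mem_append_left _ (List.mem_ofFn.2 ⟨i, rfl⟩))
        · have := h _ (List.mem_append_right _ (List.mem_ofFn.2 ⟨j, rfl⟩))
          rw [neg_dotProduct, single_dotProduct, one_mul] at this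
          have h' : -(x j) ≤ (0:ℝ) := this
          show (0:ℝ) ≤ x j
          linarith
      · rintro ⟨h1, h2⟩ p hp
        rcases List.mem_append.1 hp with hp | hp
        · obtain ⟨i, rfl⟩ := List.mem_ofFn.1 hp
          exact h1 i
        · obtain ⟨j, rfl⟩ := List.mem_ofFn.1 hp
          rw [neg_dotProduct, single_dotProduct, one_mul]
          have h2' : (0:ℝ) ≤ x j := h2 j
          have : -(x j) ≤ (0:ℝ) := by linarith
          exact this
    set cvec : Fin n → ℝ := P.mulVec w with hcvec
    have hobj : ∀ x : Fin n → ℝ, cvec ⬝ᵥ x = w ⬝ᵥ (P.transpose.mulVec x) :=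
      fun x => mulVec_dot_swap P w x
    have hne : (polySet SX).Nonempty := by
      refine ⟨0, (hXchar 0).2 ⟨?_, le_refl 0⟩⟩
      rw [Matrix.mulVec_zero]
      exact hb
    have hbound : ∀ x ∈ polySet SX, cvec ⬝ᵥ x ≤ b ⬝ᵥ u := by
      intro x hx
      obtain ⟨h1, h2⟩ := (hXchar x).1 hx
      have step1 : cvec ⬝ᵥ x ≤ (A.transpose.mulVec u) ⬝ᵥ x :=
        dot_le_dot_right (fun i => hf1 i) h2
      have step2 : (A.transpose.mulVec u) ⬝ᵥ x = u ⬝ᵥ (A.mulVec x) := by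
        rw [mulVec_dot_swap, Matrix.transpose_transpose]
      have step3 : u ⬝ᵥ (A.mulVec x) ≤ u ⬝ᵥ b :=
        Finset.sum_le_sum fun i _ => mul_le_mul_of_nonneg_left (h1 i) (hf3 i)
      rw [dotProduct_comm u b] at step3
      linarith [step1, step2 ▸ step3]
    obtain ⟨xb, hxb, hxopt⟩ := lp_attain SX cvec hne hbound
    refine ⟨xb, ?_, ?_⟩
    · rw [hX]; exact (hXchar xb).1 hxb
    · rw [Set.eq_empty_iff_forall_notMem]
      rintro z ⟨hz1, hz2⟩
      rw [Set.mem_add] at hz1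
      obtain ⟨a, ha, v, hv, hav⟩ := hz1
      rw [Set.mem_singleton_iff] at ha
      obtain ⟨hvC, hvne⟩ := hv
      rw [Set.mem_singleton_iff] at hvne
      obtain ⟨x, hxX, hPx⟩ := hz2
      have hxX' := hxX
      rw [hX] at hxX'
      have hxfeas : x ∈ polySet SX := (hXchar x).2 hxX'
      have hgt : cvec ⬝ᵥ xb < cvec ⬝ᵥ x := by
        rw [hobj, hobj, hPx, ← hav, ha, dotProduct_add]
        have := hwpos v hvC hvne
        linarith
      exact absurd (hxopt x hxfeas) (not_le.2 hgt)
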